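/- Let A be the nilpotent Matsuo algebra of the complete quadrilateral over a field k of characteristic 2, with points labeled a,b,c,x,y,z and lines ℓ={a,b,c}, m={a,y,z}, n={b,x,z}, {c,x,y}. Then A decomposes as a direct sum of eigenspaces of ad_{s_ℓ}: the 0-eigenspace is the 4-dimensional span of a, b, c, and x+y+z, and the 1-eigenspace is the 2-dimensional span of s_ℓ·x and s_ℓ·y. -/

import Mathlib

/-- The six points of the complete quadrilateral (dual affine plane of order 2). -/
inductive CQPt | A | B | C | X | Y | Z
deriving DecidableEq

/-- The "opposite point" involution of the complete quadrilateral. -/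
def CQPt.opp : CQPt → CQPt
  | .A => .X | .X => .A | .B => .Y | .Y => .B | .C => .Z | .Z => .C

/-- Collinearity in the complete quadrilateral with lines
{A,B,C}, {A,Y,Z}, {B,X,Z}, {C,X,Y}: two points are collinear iff they are
distinct and not opposite. -/
def CQPt.col (p q : CQPt) : Prop := p ≠ q ∧ q ≠ p.opp

/-- The third point on the line through two distinct collinear points of the
complete quadrilateral. -/
def CQPt.third : CQPt → CQPt → CQPt
  | .A, .B => .C | .B, .A => .C | .A, .C => .B | .C, .A => .B | .B, .C => .A | .C, .B => .A
  | .A, .Y => .Z | .Y, .A => .Z | .A, .Z => .Y | .Z, .A => .Y | .Y, .Z => .A | .Z, .Y => .A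
  | .B, .X => .Z | .X, .B => .Z | .B, .Z => .X | .Z, .B => .X | .X, .Z => .B | .Z, .X => .B
  | .C, .X => .Y | .X, .C => .Y | .C, .Y => .X | .Y, .C => .X | .X, .Y => .C | .Y, .X => .C
  | p, _ => p

/-- `A` is the nilpotent Matsuo algebra (char 2) of the geometry `(col, third)`,
with `e` the natural basis indexed by the points. -/
structure IsNilMatsuo (R : Type*) {A P : Type*} [CommRing R] [NonUnitalNonAssocCommRing A]
    [Module R A] (col : P → P → Prop) (third : P → P → P) (e : P → A) : Prop where
  char2 : (2 : R) = 0
  mul_same : ∀ p, e p * e p = 0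
  mul_of_not_col : ∀ p q, p ≠ q → ¬ col p q → e p * e q = 0
  mul_of_col : ∀ p q, p ≠ q → col p q → e p * e q = e p + e q + e (third p q)

instance : Fintype CQPt :=
  ⟨⟨{.A, .B, .C, .X, .Y, .Z}, by decide⟩, fun x => by cases x <;> decide⟩

/-- For the nilpotent Matsuo algebra of the complete quadrilateral over a field of
characteristic 2 and the line ℓ = {a,b,c}: `A` is the direct sum of the eigenspaces
of `ad_{s_ℓ}`; the 0-eigenspace is the 4-dimensional span of `a, b, c, x+y+z` and the
1-eigenspace is the 2-dimensional span of `s_ℓ·x` and `s_ℓ·y`. -/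
theorem stmt8 {k A : Type*} [Field k] [NonUnitalNonAssocCommRing A]
    [Module k A] [SMulCommClass k A A] [IsScalarTower k A A]
    (e : Module.Basis CQPt k A) (hM : IsNilMatsuo k CQPt.col CQPt.third ⇑e)
    (s : A) (hs : s = e .A + e .B + e .C) :
    Module.End.eigenspace (LinearMap.mulLeft k s) 0 =
        Submodule.span k {e .A, e .B, e .C, e .X + e .Y + e .Z} ∧
      Module.End.eigenspace (LinearMap.mulLeft k s) 1 =
        Submodule.span k {s * e .X, s * e .Y} ∧
      IsCompl (Module.End.eigenspace (LinearMap.mulLeft k s) 0)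
        (Module.End.eigenspace (LinearMap.mulLeft k s) 1) ∧
      Module.finrank k (Module.End.eigenspace (LinearMap.mulLeft k s) 0) = 4 ∧
      Module.finrank k (Module.End.eigenspace (LinearMap.mulLeft k s) 1) = 2 := by
  classical
  have hsA : s * e .A = 0 := by
    rw [hs, add_mul, add_mul, hM.mul_same,
      hM.mul_of_col .B .A (by decide) ⟨by decide, by decide⟩,
      hM.mul_of_col .C .A (by decide) ⟨by decide, by decide⟩]
    apply e.repr.injective; ext p; simp [CQPt.third, Finsupp.single_apply]
    fin_cases p <;> simp <;> first
      | linear_combination hM.char2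
      | linear_combination 2 * hM.char2
      | linear_combination 3 * hM.char2
      | linear_combination (-1) * hM.char2
      | linear_combination (-2) * hM.char2
      | linear_combination (-3) * hM.char2
  have hsB : s * e .B = 0 := by
    rw [hs, add_mul, add_mul, hM.mul_same,
      hM.mul_of_col .A .B (by decide) ⟨by decide, by decide⟩,
      hM.mul_of_col .C .B (by decide) ⟨by decide, by decide⟩]
    apply e.repr.injective; ext p; simp [CQPt.third, Finsupp.single_apply]
    fin_cases p <;> simp <;> first
      | linear_combination hM.char2
      | linear_combination 2 * hM.char2
      | linear_combination 3 * hM.char2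
      | linear_combination (-1) * hM.char2
      | linear_combination (-2) * hM.char2
      | linear_combination (-3) * hM.char2
  have hsC : s * e .C = 0 := by
    rw [hs, add_mul, add_mul, hM.mul_same,
      hM.mul_of_col .A .C (by decide) ⟨by decide, by decide⟩,
      hM.mul_of_col .B .C (by decide) ⟨by decide, by decide⟩]
    apply e.repr.injective; ext p; simp [CQPt.third, Finsupp.single_apply]
    fin_cases p <;> simp <;> first
      | linear_combination hM.char2
      | linear_combination 2 * hM.char2
      | linear_combination 3 * hM.char2
      | linear_combination (-1) * hM.char2
      | linear_combination (-2) * hM.char2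
      | linear_combination (-3) * hM.char2
  have hsX : s * e .X = e .B + e .C + e .Y + e .Z := by
    rw [hs, add_mul, add_mul,
      hM.mul_of_not_col .A .X (by decide) (fun h => h.2 rfl),
      hM.mul_of_col .B .X (by decide) ⟨by decide, by decide⟩,
      hM.mul_of_col .C .X (by decide) ⟨by decide, by decide⟩]
    apply e.repr.injective; ext p; simp [CQPt.third, Finsupp.single_apply]
    fin_cases p <;> simp <;> first
      | linear_combination hM.char2
      | linear_combination 2 * hM.char2
      | linear_combination 3 * hM.char2
      | linear_combination (-1) * hM.char2
      | linear_combination (-2) * hM.char2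
      | linear_combination (-3) * hM.char2
  have hsY : s * e .Y = e .A + e .C + e .X + e .Z := by
    rw [hs, add_mul, add_mul,
      hM.mul_of_not_col .B .Y (by decide) (fun h => h.2 rfl),
      hM.mul_of_col .A .Y (by decide) ⟨by decide, by decide⟩,
      hM.mul_of_col .C .Y (by decide) ⟨by decide, by decide⟩]
    apply e.repr.injective; ext p; simp [CQPt.third, Finsupp.single_apply]
    fin_cases p <;> simp <;> first
      | linear_combination hM.char2
      | linear_combination 2 * hM.char2
      | linear_combination 3 * hM.char2
      | linear_combination (-1) * hM.char2
      | linear_combination (-2) * hM.char2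
      | linear_combination (-3) * hM.char2
  have hsZ : s * e .Z = e .A + e .B + e .X + e .Y := by
    rw [hs, add_mul, add_mul,
      hM.mul_of_not_col .C .Z (by decide) (fun h => h.2 rfl),
      hM.mul_of_col .A .Z (by decide) ⟨by decide, by decide⟩,
      hM.mul_of_col .B .Z (by decide) ⟨by decide, by decide⟩]
    apply e.repr.injective; ext p; simp [CQPt.third, Finsupp.single_apply]
    fin_cases p <;> simp <;> first
      | linear_combination hM.char2
      | linear_combination 2 * hM.char2
      | linear_combination 3 * hM.char2
      | linear_combination (-1) * hM.char2
      | linear_combination (-2) * hM.char2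
      | linear_combination (-3) * hM.char2
  have hsZ' : s * e .Z = s * e .X + s * e .Y := by
    rw [hsX, hsY, hsZ]
    apply e.repr.injective; ext p; simp [Finsupp.single_apply]
    fin_cases p <;> simp <;> first
      | linear_combination hM.char2
      | linear_combination 2 * hM.char2
      | linear_combination 3 * hM.char2
      | linear_combination (-1) * hM.char2
      | linear_combination (-2) * hM.char2
      | linear_combination (-3) * hM.char2
  set T : Module.End k A := LinearMap.mulLeft k s with hT
  have hTapp : ∀ v : A, T v = s * v := fun v => rfl
  -- idempotency
  have hTT : T ∘ₗ T = T := by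
    apply e.ext
    intro p
    cases p
    case A => simp [hTapp, hsA]
    case B => simp [hTapp, hsB]
    case C => simp [hTapp, hsC]
    case X =>
      simp only [LinearMap.comp_apply, hTapp, hsX]
      simp only [mul_add, hsB, hsC, hsY, hsZ]
      apply e.repr.injective; ext p; simp [Finsupp.single_apply]
      fin_cases p <;> simp <;> first
      | linear_combination hM.char2
      | linear_combination 2 * hM.char2
      | linear_combination 3 * hM.char2
      | linear_combination (-1) * hM.char2
      | linear_combination (-2) * hM.char2
      | linear_combination (-3) * hM.char2
    case Y =>
      simp only [LinearMap.comp_apply, hTapp, hsY]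
      simp only [mul_add, hsA, hsC, hsX, hsZ]
      apply e.repr.injective; ext p; simp [Finsupp.single_apply]
      fin_cases p <;> simp <;> first
      | linear_combination hM.char2
      | linear_combination 2 * hM.char2
      | linear_combination 3 * hM.char2
      | linear_combination (-1) * hM.char2
      | linear_combination (-2) * hM.char2
      | linear_combination (-3) * hM.char2
    case Z =>
      simp only [LinearMap.comp_apply, hTapp, hsZ]
      simp only [mul_add, hsA, hsB, hsX, hsY]
      apply e.repr.injective; ext p; simp [Finsupp.single_apply]
      fin_cases p <;> simp <;> first
      | linear_combination hM.char2
      | linear_combination 2 * hM.char2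
      | linear_combination 3 * hM.char2
      | linear_combination (-1) * hM.char2
      | linear_combination (-2) * hM.char2
      | linear_combination (-3) * hM.char2
  have hTT' : ∀ v : A, T (T v) = T v := fun v => LinearMap.ext_iff.1 hTT v
  have hFD : Module.Finite k A := Module.Finite.of_basis e
  -- eigenspace identifications
  have heig0 : Module.End.eigenspace T 0 = LinearMap.ker T := Module.End.eigenspace_zero T
  have heig1 : Module.End.eigenspace T 1 = LinearMap.range T := by
    ext v
    rw [Module.End.mem_eigenspace_iff, one_smul]
    constructor
    · intro h; exact ⟨v, h⟩
    · rintro ⟨u, rfl⟩; exact hTT' u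
  -- range = span {sX, sY}
  have mX : s * e .X ∈ Submodule.span k {s * e .X, s * e .Y} :=
    Submodule.subset_span (by simp)
  have mY : s * e .Y ∈ Submodule.span k {s * e .X, s * e .Y} :=
    Submodule.subset_span (by simp)
  have hrange : LinearMap.range T = Submodule.span k {s * e .X, s * e .Y} := by
    apply le_antisymm
    · rw [LinearMap.range_eq_map, ← e.span_eq, Submodule.map_span]
      refine Submodule.span_le.2 ?_
      rintro _ ⟨_, ⟨p, rfl⟩, rfl⟩
      cases p
      · rw [hTapp, hsA]; exact Submodule.zero_mem _
      · rw [hTapp, hsB]; exact Submodule.zero_mem _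
      · rw [hTapp, hsC]; exact Submodule.zero_mem _
      · rw [hTapp]; exact mX
      · rw [hTapp]; exact mY
      · rw [hTapp, hsZ']; exact Submodule.add_mem _ mX mY
    · refine Submodule.span_le.2 ?_
      rintro v hv
      rcases hv with rfl | rfl
      · exact ⟨e .X, rfl⟩
      · exact ⟨e .Y, rfl⟩
  -- IsCompl ker range
  have hcompl : IsCompl (LinearMap.ker T) (LinearMap.range T) := by
    constructor
    · rw [disjoint_iff_inf_le]
      rintro v ⟨hk, u, rfl⟩
      simpa [LinearMap.mem_ker.1 hk] using (hTT' u).symm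
    · rw [codisjoint_iff_le_sup]
      intro v _
      have h1 : v - T v ∈ LinearMap.ker T := by
        rw [LinearMap.mem_ker, map_sub, hTT' v, sub_self]
      have h2 : T v ∈ LinearMap.range T := ⟨v, rfl⟩
      have := Submodule.add_mem_sup h1 h2
      simpa using this
  -- linear independence of the pair
  have hli2 : LinearIndependent k ![s * e .X, s * e .Y] := by
    rw [LinearIndependent.pair_iff]
    intro a b h
    rw [hsX, hsY] at h
    constructor
    · have := congrArg (fun v => e.repr v CQPt.B) h
      simpa [Finsupp.single_apply] using this
    · have := congrArg (fun v => e.repr v CQPt.A) h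
      simpa [Finsupp.single_apply] using this
  have hsetr2 : Set.range ![s * e .X, s * e .Y] = {s * e .X, s * e .Y} := by
    ext v
    simp only [Set.mem_range, Set.mem_insert_iff, Set.mem_singleton_iff]
    constructor
    · rintro ⟨i, rfl⟩; fin_cases i <;> simp
    · rintro (rfl | rfl)
      exacts [⟨0, rfl⟩, ⟨1, rfl⟩]
  have hfr2 : Module.finrank k (Submodule.span k {s * e .X, s * e .Y}) = 2 := by
    have := finrank_span_eq_card hli2
    rw [hsetr2] at this
    simpa using this
  -- linear independence of the quadruple
  have hli4 : LinearIndependent k ![e .A, e .B, e .C, e .X + e .Y + e .Z] := by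
    rw [Fintype.linearIndependent_iff]
    intro c hc
    rw [Fin.sum_univ_four] at hc
    simp only [Matrix.cons_val_zero, Matrix.cons_val_one, Matrix.head_cons,
      Matrix.cons_val_two, Matrix.tail_cons, Matrix.cons_val_three] at hc
    intro i
    fin_cases i
    · have := congrArg (fun v => e.repr v CQPt.A) hc
      simpa [Finsupp.single_apply] using this
    · have := congrArg (fun v => e.repr v CQPt.B) hc
      simpa [Finsupp.single_apply] using this
    · have := congrArg (fun v => e.repr v CQPt.C) hc
      simpa [Finsupp.single_apply] using this
    · have := congrArg (fun v => e.repr v CQPt.X) hc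
      simpa [Finsupp.single_apply] using this
  have hsetr4 : Set.range ![e .A, e .B, e .C, e .X + e .Y + e .Z]
      = {e .A, e .B, e .C, e .X + e .Y + e .Z} := by
    ext v
    simp only [Set.mem_range, Set.mem_insert_iff, Set.mem_singleton_iff]
    constructor
    · rintro ⟨i, rfl⟩; fin_cases i <;> simp
    · rintro (rfl | rfl | rfl | rfl)
      exacts [⟨0, rfl⟩, ⟨1, rfl⟩, ⟨2, rfl⟩, ⟨3, rfl⟩]
  have hfr4span : Module.finrank k
      (Submodule.span k {e .A, e .B, e .C, e .X + e .Y + e .Z}) = 4 := by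
    have := finrank_span_eq_card hli4
    rw [hsetr4] at this
    simpa using this
  have hfrA : Module.finrank k A = 6 := by
    rw [Module.finrank_eq_card_basis e]; rfl
  have hfrker : Module.finrank k (LinearMap.ker T) = 4 := by
    have := Submodule.finrank_add_eq_of_isCompl hcompl
    rw [hfrA, hrange, hfr2] at this
    omega
  -- ker = span
  have hker : LinearMap.ker T = Submodule.span k {e .A, e .B, e .C, e .X + e .Y + e .Z} := by
    have hsumXYZ : s * e .X + s * e .Y + s * e .Z = 0 := by
      rw [hsX, hsY, hsZ]
      apply e.repr.injective; ext p; simp [Finsupp.single_apply]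
      fin_cases p <;> simp <;> first
      | linear_combination hM.char2
      | linear_combination 2 * hM.char2
      | linear_combination 3 * hM.char2
      | linear_combination (-1) * hM.char2
      | linear_combination (-2) * hM.char2
      | linear_combination (-3) * hM.char2
    have hle : Submodule.span k {e .A, e .B, e .C, e .X + e .Y + e .Z} ≤ LinearMap.ker T := by
      refine Submodule.span_le.2 ?_
      rintro v hv
      rw [Set.mem_insert_iff, Set.mem_insert_iff, Set.mem_insert_iff,
        Set.mem_singleton_iff] at hv
      rcases hv with rfl | rfl | rfl | rfl
      · exact LinearMap.mem_ker.2 (by rw [hTapp, hsA])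
      · exact LinearMap.mem_ker.2 (by rw [hTapp, hsB])
      · exact LinearMap.mem_ker.2 (by rw [hTapp, hsC])
      · refine LinearMap.mem_ker.2 ?_
        rw [hTapp, mul_add, mul_add, hsumXYZ]
    exact (Submodule.eq_of_le_of_finrank_le hle (by rw [hfrker, hfr4span])).symm
  refine ⟨by rw [heig0, hker], by rw [heig1, hrange], ?_, ?_, ?_⟩
  · rw [heig0, heig1]; exact hcompl
  · rw [heig0]; exact hfrker
  · rw [heig1, hrange]; exact hfr2
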